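/- Let D > 0, t > 0, R > 0, and let y, c be points of ℝ³ with d := ‖y − c‖ > 0. Then (4·π·D·t)^{−3/2} · ∫_{x ∈ ball(c, R)} exp( −‖x − y‖² / (4·D·t) ) dx = (1/2)·( erf((R+d)/(2·√(D·t))) + erf((R−d)/(2·√(D·t))) ) + (√(D·t)/(d·√π)) · ( exp(−(R+d)²/(4·D·t)) − exp(−(R−d)²/(4·D·t)) ), where the integral is with respect to Lebesgue measure on ℝ³ over the open ball of radius R centered at c. -/

import Mathlib

open MeasureTheory Real Set

/-- The Gauss error function `erf x = (2/√π) ∫₀ˣ exp(−u²) du`. -/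
noncomputable def erf (x : ℝ) : ℝ :=
  (2 / Real.sqrt π) * ∫ u in (0 : ℝ)..x, Real.exp (-u ^ 2)

lemma erf_hasDerivAt (x : ℝ) : HasDerivAt erf (2 / Real.sqrt π * Real.exp (-x ^ 2)) x := by
  have h : HasDerivAt (fun y => ∫ u in (0:ℝ)..y, Real.exp (-u ^ 2)) (Real.exp (-x ^ 2)) x := by
    refine intervalIntegral.integral_hasDerivAt_right ?_ ?_ ?_
    · exact (Continuous.intervalIntegrable (by continuity) _ _)
    · exact (Continuous.stronglyMeasurableAtFilter (by continuity) _ _)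
    · exact (Continuous.continuousAt (by continuity))
  have h' := h.const_mul (2 / Real.sqrt π)
  exact h'

lemma erf_neg (x : ℝ) : erf (-x) = - erf x := by
  unfold erf
  have : ∫ u in (0:ℝ)..(-x), Real.exp (-u ^ 2) = - ∫ u in (0:ℝ)..x, Real.exp (-u ^ 2) := by
    have := intervalIntegral.integral_comp_neg (a := (0:ℝ)) (b := -x) (fun u => Real.exp (-u ^ 2))
    simp only [neg_neg, neg_zero] at this
    rw [show (∫ u in (0:ℝ)..(-x), Real.exp (-u ^ 2)) =
        ∫ u in (0:ℝ)..(-x), Real.exp (-(-u) ^ 2) by simp, this,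
      intervalIntegral.integral_symm]
  rw [this]; ring

lemma gauss_interval (a d R : ℝ) (ha : 0 < a) :
    ∫ u in (-R)..R, Real.exp (-(u - d) ^ 2 / a)
      = Real.sqrt π * Real.sqrt a / 2 *
          (erf ((R + d) / Real.sqrt a) + erf ((R - d) / Real.sqrt a)) := by
  have hs : (0:ℝ) < Real.sqrt a := Real.sqrt_pos.2 ha
  have key : ∀ u : ℝ, HasDerivAt
      (fun u => Real.sqrt π * Real.sqrt a / 2 * erf ((u - d) / Real.sqrt a))
      (Real.exp (-(u - d) ^ 2 / a)) u := by
    intro u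
    have h1 : HasDerivAt (fun u : ℝ => (u - d) / Real.sqrt a) (1 / Real.sqrt a) u := by
      simpa using ((hasDerivAt_id u).sub_const d).div_const (Real.sqrt a)
    have h2 := (erf_hasDerivAt ((u - d) / Real.sqrt a)).comp u h1
    have h3 := h2.const_mul (Real.sqrt π * Real.sqrt a / 2)
    refine h3.congr_deriv ?_
    have hπ : (0:ℝ) < Real.sqrt π := Real.sqrt_pos.2 Real.pi_pos
    have hsq : ((u - d) / Real.sqrt a) ^ 2 = (u - d) ^ 2 / a := by
      rw [div_pow, Real.sq_sqrt ha.le]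
    rw [hsq]
    field_simp
  rw [intervalIntegral.integral_eq_sub_of_hasDerivAt (fun u _ => key u)
    (Continuous.intervalIntegrable (by continuity) _ _)]
  have : (-R - d) / Real.sqrt a = -((R + d) / Real.sqrt a) := by ring
  rw [this, erf_neg]
  ring

lemma exp_linear_interval (a d R : ℝ) (ha : 0 < a) (hd : 0 < d) :
    ∫ u in (-R)..R, Real.exp ((2 * d * u - (R ^ 2 + d ^ 2)) / a)
      = a / (2 * d) * (Real.exp (-(R - d) ^ 2 / a) - Real.exp (-(R + d) ^ 2 / a)) := by
  have key : ∀ u : ℝ, HasDerivAt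
      (fun u => a / (2 * d) * Real.exp ((2 * d * u - (R ^ 2 + d ^ 2)) / a))
      (Real.exp ((2 * d * u - (R ^ 2 + d ^ 2)) / a)) u := by
    intro u
    have h1 : HasDerivAt (fun u : ℝ => (2 * d * u - (R ^ 2 + d ^ 2)) / a) (2 * d / a) u := by
      simpa using (((hasDerivAt_id u).const_mul (2 * d)).sub_const (R ^ 2 + d ^ 2)).div_const a
    have h2 := (h1.exp).const_mul (a / (2 * d))
    refine h2.congr_deriv ?_
    field_simp
  rw [intervalIntegral.integral_eq_sub_of_hasDerivAt (fun u _ => key u)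
    (Continuous.intervalIntegrable (by continuity) _ _)]
  have e1 : (2 * d * R - (R ^ 2 + d ^ 2)) / a = -(R - d) ^ 2 / a := by ring
  have e2 : (2 * d * (-R) - (R ^ 2 + d ^ 2)) / a = -(R + d) ^ 2 / a := by ring
  rw [e1, e2]; ring

lemma radial_integral (a ρ : ℝ) (ha : 0 < a) :
    ∫ r in (0:ℝ)..ρ, r * Real.exp (-r ^ 2 / a)
      = a / 2 * (1 - Real.exp (-ρ ^ 2 / a)) := by
  have key : ∀ r : ℝ, HasDerivAt (fun r => -(a / 2) * Real.exp (-r ^ 2 / a))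
      (r * Real.exp (-r ^ 2 / a)) r := by
    intro r
    have h1 : HasDerivAt (fun r : ℝ => -r ^ 2 / a) (-(2 * r) / a) r := by
      simpa using ((hasDerivAt_pow 2 r).neg).div_const a
    have h2 := (h1.exp).const_mul (-(a / 2))
    refine h2.congr_deriv ?_
    field_simp
  rw [intervalIntegral.integral_eq_sub_of_hasDerivAt (fun r _ => key r)
    (Continuous.intervalIntegrable (by continuity) _ _)]
  simp
  ring

lemma disc_integral (a b : ℝ) (ha : 0 < a) (hb : 0 < b) :
    ∫ p : ℝ × ℝ, Set.indicator {q : ℝ × ℝ | q.1 ^ 2 + q.2 ^ 2 < b}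
        (fun q => Real.exp (-(q.1 ^ 2 + q.2 ^ 2) / a)) p
      = π * a * (1 - Real.exp (-b / a)) := by
  rw [← integral_comp_polarCoord_symm]
  have hval : ∀ p : ℝ × ℝ,
      (polarCoord.symm p).1 ^ 2 + (polarCoord.symm p).2 ^ 2 = p.1 ^ 2 := by
    intro p
    have : (p.1 * Real.cos p.2) ^ 2 + (p.1 * Real.sin p.2) ^ 2
        = p.1 ^ 2 * (Real.cos p.2 ^ 2 + Real.sin p.2 ^ 2) := by ring
    simp [polarCoord, this, Real.cos_sq_add_sin_sq]
  have hfun : ∀ p : ℝ × ℝ, p.1 • Set.indicator {q : ℝ × ℝ | q.1 ^ 2 + q.2 ^ 2 < b}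
        (fun q => Real.exp (-(q.1 ^ 2 + q.2 ^ 2) / a)) (polarCoord.symm p)
      = (Set.indicator {r : ℝ | r ^ 2 < b} (fun r => r * Real.exp (-r ^ 2 / a)) p.1)
          * (fun _ : ℝ => (1:ℝ)) p.2 := by
    intro p
    have hm : polarCoord.symm p ∈ {q : ℝ × ℝ | q.1 ^ 2 + q.2 ^ 2 < b} ↔ p.1 ^ 2 < b := by
      rw [Set.mem_setOf_eq, hval p]
    simp only [mul_one, smul_eq_mul]
    by_cases h : p.1 ^ 2 < b
    · rw [Set.indicator_of_mem (hm.2 h), Set.indicator_of_mem (by simpa using h), hval p]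
    · rw [Set.indicator_of_notMem (fun hc => h (hm.1 hc)),
        Set.indicator_of_notMem (by simpa using h), mul_zero]
  rw [show polarCoord.target = Set.Ioi (0:ℝ) ×ˢ Set.Ioo (-π) π from rfl]
  rw [MeasureTheory.setIntegral_congr_fun (by measurability) (fun p _ => hfun p)]
  rw [MeasureTheory.Measure.volume_eq_prod,
    MeasureTheory.setIntegral_prod_mul (L := ℝ)
      (Set.indicator {r : ℝ | r ^ 2 < b} (fun r => r * Real.exp (-r ^ 2 / a)))
      (fun _ : ℝ => (1:ℝ)) (Set.Ioi (0:ℝ)) (Set.Ioo (-π) π)]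
  have h2 : (∫ _ in Set.Ioo (-π) π, (1:ℝ)) = 2 * π := by
    simp [Real.volume_Ioo]
    rw [max_eq_left (by positivity)]
    ring
  have h1 : (∫ r in Set.Ioi (0:ℝ), Set.indicator {r : ℝ | r ^ 2 < b}
      (fun r => r * Real.exp (-r ^ 2 / a)) r)
      = ∫ r in Set.Ioo (0:ℝ) (Real.sqrt b), r * Real.exp (-r ^ 2 / a) := by
    rw [← MeasureTheory.integral_indicator measurableSet_Ioo,
      ← MeasureTheory.integral_indicator measurableSet_Ioi]
    congr 1
    funext r
    by_cases hr : r ∈ Set.Ioi (0:ℝ)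
    · rw [Set.indicator_of_mem hr]
      have hiff : r ^ 2 < b ↔ r ∈ Set.Ioo (0:ℝ) (Real.sqrt b) := by
        rw [Set.mem_Ioo]
        constructor
        · intro h; exact ⟨hr, (Real.lt_sqrt (le_of_lt hr)).2 h⟩
        · rintro ⟨h1', h2'⟩; exact (Real.lt_sqrt (le_of_lt h1')).1 h2'
      by_cases h : r ^ 2 < b
      · rw [Set.indicator_of_mem (by simpa using h), Set.indicator_of_mem (hiff.1 h)]
      · rw [Set.indicator_of_notMem (by simpa using h),
          Set.indicator_of_notMem (fun hc => h (hiff.2 hc))]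
    · rw [Set.indicator_of_notMem hr, Set.indicator_of_notMem]
      intro hc
      exact hr (Set.mem_Ioi.2 hc.1)
  rw [h1, h2, ← MeasureTheory.integral_Ioc_eq_integral_Ioo,
    ← intervalIntegral.integral_of_le (Real.sqrt_nonneg b),
    radial_integral a _ ha, Real.sq_sqrt hb.le]
  ring

local notation "E3" => EuclideanSpace ℝ (Fin 3)

lemma ball_center_reduce (a R d : ℝ) (hd : 0 < d)
    (y c : E3) (hdef : d = ‖y - c‖) :
    ∫ x in Metric.ball c R, Real.exp (-‖x - y‖ ^ 2 / a)
      = ∫ x : E3, Set.indicator (Metric.ball (0 : E3) R)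
          (fun z => Real.exp (-‖z - (d • EuclideanSpace.single (0 : Fin 3) (1:ℝ))‖ ^ 2 / a)) x := by
  set w : E3 := y - c with hw
  set v : E3 := d • EuclideanSpace.single (0 : Fin 3) (1:ℝ) with hv
  have hnv : ‖v‖ = d := by
    rw [hv, norm_smul, EuclideanSpace.norm_single]
    simp [abs_of_pos hd]
  have hnw : ‖w‖ = d := hdef.symm
  set K := (ℝ ∙ (v - w))ᗮ with hK
  have hrefl : (Submodule.reflection K) v = w := Submodule.reflection_sub (by rw [hnv, hnw])
  have hmp : MeasurePreserving (Submodule.reflection K) :=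
    (Submodule.reflection K).measurePreserving
  rw [← MeasureTheory.integral_indicator measurableSet_ball]
  rw [← MeasureTheory.integral_add_right_eq_self
    (fun x => Set.indicator (Metric.ball c R) (fun z => Real.exp (-‖z - y‖ ^ 2 / a)) x) c]
  have h1 : ∀ x : E3, Set.indicator (Metric.ball c R)
      (fun z => Real.exp (-‖z - y‖ ^ 2 / a)) (x + c)
      = Set.indicator (Metric.ball (0 : E3) R)
        (fun z => Real.exp (-‖z - w‖ ^ 2 / a)) x := by
    intro x
    have hmem : x + c ∈ Metric.ball c R ↔ x ∈ Metric.ball (0 : E3) R := by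
      simp [Metric.mem_ball, dist_eq_norm]
    have hval : x + c - y = x - w := by rw [hw]; abel
    by_cases h : x ∈ Metric.ball (0 : E3) R
    · rw [Set.indicator_of_mem (hmem.2 h), Set.indicator_of_mem h, hval]
    · rw [Set.indicator_of_notMem (fun hc => h (hmem.1 hc)), Set.indicator_of_notMem h]
  simp_rw [h1]
  rw [← hmp.integral_comp (Submodule.reflection K).toHomeomorph.measurableEmbedding]
  congr 1
  funext x
  have hmem : (Submodule.reflection K) x ∈ Metric.ball (0 : E3) R ↔ x ∈ Metric.ball (0 : E3) R := by
    simp only [mem_ball_zero_iff]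
    rw [(Submodule.reflection K).norm_map]
  have hval : ‖(Submodule.reflection K) x - w‖ = ‖x - v‖ := by
    have h' : (Submodule.reflection K) x - w = (Submodule.reflection K) (x - v) := by rw [map_sub, hrefl]
    rw [h', (Submodule.reflection K).norm_map]
  by_cases h : x ∈ Metric.ball (0 : E3) R
  · rw [Set.indicator_of_mem (hmem.2 h), Set.indicator_of_mem h, hval]
  · rw [Set.indicator_of_notMem (fun hc => h (hmem.1 hc)), Set.indicator_of_notMem h]

noncomputable def ψ : (ℝ × ℝ × ℝ) ≃ᵐ E3 :=
  ((MeasurableEquiv.refl ℝ).prodCongr MeasurableEquiv.finTwoArrow.symm).trans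
    (((MeasurableEquiv.piFinSuccAbove (fun _ => ℝ) (0 : Fin 3)).symm).trans
      (MeasurableEquiv.toLp 2 (Fin 3 → ℝ)))

lemma ψ_measurePreserving : MeasurePreserving ψ volume volume := by
  have h1 : MeasurePreserving
      ((MeasurableEquiv.refl ℝ).prodCongr MeasurableEquiv.finTwoArrow.symm)
      volume volume :=
    (MeasurePreserving.id volume).prod ((volume_preserving_finTwoArrow ℝ).symm _)
  have h2 : MeasurePreserving
      ((MeasurableEquiv.piFinSuccAbove (fun _ => ℝ) (0 : Fin 3)).symm) volume volume :=
    (volume_preserving_piFinSuccAbove (fun _ => ℝ) 0).symm _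
  have h3 : MeasurePreserving ((MeasurableEquiv.toLp 2 (Fin 3 → ℝ)))
      volume volume :=
    (EuclideanSpace.volume_preserving_symm_measurableEquiv_toLp (Fin 3)).symm _
  exact ((h3.comp h2).comp h1)

lemma ψ_apply (q : ℝ × ℝ × ℝ) (i : Fin 3) : ψ q i = ![q.1, q.2.1, q.2.2] i := by
  fin_cases i <;> rfl

lemma normsq (z : E3) : ‖z‖ ^ 2 = z 0 ^ 2 + z 1 ^ 2 + z 2 ^ 2 := by
  rw [EuclideanSpace.norm_eq, sq_sqrt (by positivity)]
  simp [Fin.sum_univ_three, sq_abs]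

lemma coord_fun_eq (a R d : ℝ) (hR : 0 < R) :
    (Set.indicator (Metric.ball (0 : E3) R)
        (fun z => Real.exp (-‖z - (d • EuclideanSpace.single (0 : Fin 3) (1:ℝ))‖ ^ 2 / a))) ∘ ψ
      = fun q : ℝ × ℝ × ℝ =>
          Set.indicator {q : ℝ × ℝ × ℝ | q.1 ^ 2 + q.2.1 ^ 2 + q.2.2 ^ 2 < R ^ 2}
            (fun q => Real.exp (-((q.1 - d) ^ 2 + q.2.1 ^ 2 + q.2.2 ^ 2) / a)) q := by
  set v : E3 := d • EuclideanSpace.single (0 : Fin 3) (1:ℝ) with hv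
  funext q
  simp only [Function.comp_apply]
  have hv0 : v 0 = d := by simp [hv, EuclideanSpace.single_apply]
  have hv1 : v 1 = 0 := by simp [hv, EuclideanSpace.single_apply]
  have hv2 : v 2 = 0 := by simp [hv, EuclideanSpace.single_apply]
  have hsub : ∀ i, (ψ q - v) i = ψ q i - v i := fun _ => rfl
  have hnorm : ‖ψ q - v‖ ^ 2 = (q.1 - d) ^ 2 + q.2.1 ^ 2 + q.2.2 ^ 2 := by
    rw [normsq, hsub, hsub, hsub, hv0, hv1, hv2, ψ_apply, ψ_apply, ψ_apply]
    norm_num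
    rfl
  have hnq : ‖ψ q‖ ^ 2 = q.1 ^ 2 + q.2.1 ^ 2 + q.2.2 ^ 2 := by
    rw [normsq, ψ_apply, ψ_apply, ψ_apply]
    norm_num
    rfl
  have hmem : ψ q ∈ Metric.ball (0 : E3) R ↔ q.1 ^ 2 + q.2.1 ^ 2 + q.2.2 ^ 2 < R ^ 2 := by
    rw [mem_ball_zero_iff, ← hnq]
    exact ⟨fun h => by nlinarith [norm_nonneg (ψ q)],
      fun h => by nlinarith [norm_nonneg (ψ q)]⟩
  by_cases h : q.1 ^ 2 + q.2.1 ^ 2 + q.2.2 ^ 2 < R ^ 2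
  · rw [Set.indicator_of_mem (hmem.2 h), Set.indicator_of_mem (by simpa using h), hnorm]
  · rw [Set.indicator_of_notMem (fun hc => h (hmem.1 hc)),
      Set.indicator_of_notMem (by simpa using h)]

lemma inner_slice (a R d u : ℝ) (ha : 0 < a) (hR : 0 < R) :
    (∫ p : ℝ × ℝ, Set.indicator {q : ℝ × ℝ × ℝ | q.1 ^ 2 + q.2.1 ^ 2 + q.2.2 ^ 2 < R ^ 2}
        (fun q => Real.exp (-((q.1 - d) ^ 2 + q.2.1 ^ 2 + q.2.2 ^ 2) / a)) (u, p))
      = Set.indicator (Set.Ioo (-R) R)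
          (fun u => Real.exp (-(u - d) ^ 2 / a)
            * (π * a * (1 - Real.exp (-(R ^ 2 - u ^ 2) / a)))) u := by
  by_cases hu : u ∈ Set.Ioo (-R) R
  · have hb : 0 < R ^ 2 - u ^ 2 := by
      obtain ⟨h1, h2⟩ := hu; nlinarith
    have hfun : ∀ p : ℝ × ℝ,
        Set.indicator {q : ℝ × ℝ × ℝ | q.1 ^ 2 + q.2.1 ^ 2 + q.2.2 ^ 2 < R ^ 2}
          (fun q => Real.exp (-((q.1 - d) ^ 2 + q.2.1 ^ 2 + q.2.2 ^ 2) / a)) (u, p)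
        = Real.exp (-(u - d) ^ 2 / a) *
            Set.indicator {q : ℝ × ℝ | q.1 ^ 2 + q.2 ^ 2 < R ^ 2 - u ^ 2}
              (fun q => Real.exp (-(q.1 ^ 2 + q.2 ^ 2) / a)) p := by
      intro p
      have hmem : (u, p) ∈ {q : ℝ × ℝ × ℝ | q.1 ^ 2 + q.2.1 ^ 2 + q.2.2 ^ 2 < R ^ 2}
          ↔ p ∈ {q : ℝ × ℝ | q.1 ^ 2 + q.2 ^ 2 < R ^ 2 - u ^ 2} := by
        simp only [Set.mem_setOf_eq]
        constructor <;> intro h <;> linarith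
      by_cases h : p ∈ {q : ℝ × ℝ | q.1 ^ 2 + q.2 ^ 2 < R ^ 2 - u ^ 2}
      · rw [Set.indicator_of_mem (hmem.2 h), Set.indicator_of_mem h, ← Real.exp_add]
        congr 1
        ring
      · rw [Set.indicator_of_notMem (fun hc => h (hmem.1 hc)),
          Set.indicator_of_notMem h, mul_zero]
    rw [Set.indicator_of_mem hu]
    simp_rw [hfun]
    rw [MeasureTheory.integral_const_mul, disc_integral a _ ha hb]
  · have hb : R ^ 2 - u ^ 2 ≤ 0 := by
      simp only [Set.mem_Ioo, not_and_or, not_lt] at hu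
      rcases hu with h | h <;> nlinarith
    have hzero : ∀ p : ℝ × ℝ,
        Set.indicator {q : ℝ × ℝ × ℝ | q.1 ^ 2 + q.2.1 ^ 2 + q.2.2 ^ 2 < R ^ 2}
          (fun q => Real.exp (-((q.1 - d) ^ 2 + q.2.1 ^ 2 + q.2.2 ^ 2) / a)) (u, p) = 0 := by
      intro p
      apply Set.indicator_of_notMem
      simp only [Set.mem_setOf_eq, not_lt]
      nlinarith [sq_nonneg p.1, sq_nonneg p.2]
    rw [Set.indicator_of_notMem hu]
    simp_rw [hzero, integral_zero]

/-- Equation (B.1) of the paper: the probability that a molecule released at `y`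
and diffusing with coefficient `D` lies, at time `t`, inside the spherical
passive receiver of radius `R` centered at `c`, expressed via error functions. -/
theorem gaussian_ball_integral_erf (D t R : ℝ) (hD : 0 < D) (ht : 0 < t) (hR : 0 < R)
    (y c : EuclideanSpace ℝ (Fin 3)) (d : ℝ) (hdef : d = ‖y - c‖) (hd : 0 < d) :
    (4 * π * D * t) ^ (-(3 : ℝ) / 2) *
        ∫ x in Metric.ball c R, Real.exp (-‖x - y‖ ^ 2 / (4 * D * t))
      = (1 / 2) * (erf ((R + d) / (2 * Real.sqrt (D * t)))
                    + erf ((R - d) / (2 * Real.sqrt (D * t))))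
        + Real.sqrt (D * t) / (d * Real.sqrt π) *
            (Real.exp (-(R + d) ^ 2 / (4 * D * t))
              - Real.exp (-(R - d) ^ 2 / (4 * D * t))) := by
  set a : ℝ := 4 * D * t with hadef
  have ha : 0 < a := by positivity
  set v : E3 := d • EuclideanSpace.single (0 : Fin 3) (1:ℝ) with hv
  set G : E3 → ℝ := Set.indicator (Metric.ball (0 : E3) R)
    (fun z => Real.exp (-‖z - v‖ ^ 2 / a)) with hG
  set H : ℝ × ℝ × ℝ → ℝ := fun q =>
    Set.indicator {q : ℝ × ℝ × ℝ | q.1 ^ 2 + q.2.1 ^ 2 + q.2.2 ^ 2 < R ^ 2}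
      (fun q => Real.exp (-((q.1 - d) ^ 2 + q.2.1 ^ 2 + q.2.2 ^ 2) / a)) q with hH
  -- Step 1: reduce the ball integral to a product-space integral
  have step1 : (∫ x in Metric.ball c R, Real.exp (-‖x - y‖ ^ 2 / a)) = ∫ q : ℝ × ℝ × ℝ, H q := by
    rw [ball_center_reduce a R d hd y c hdef]
    rw [← ψ_measurePreserving.integral_comp ψ.measurableEmbedding]
    have hfe : ∀ x : ℝ × ℝ × ℝ, Set.indicator (Metric.ball (0 : E3) R)
        (fun z => Real.exp (-‖z - v‖ ^ 2 / a)) (ψ x) = H x :=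
      fun x => congrFun (coord_fun_eq a R d hR) x
    exact MeasureTheory.integral_congr_ae (Filter.Eventually.of_forall hfe)
  -- Integrability
  have hGcont : Continuous (fun z : E3 => Real.exp (-‖z - v‖ ^ 2 / a)) :=
    Real.continuous_exp.comp
      ((((continuous_id.sub continuous_const).norm.pow 2).neg).div_const a)
  have hGint : Integrable G := by
    refine IntegrableOn.integrable_indicator ?_ measurableSet_ball
    exact ((hGcont.continuousOn.integrableOn_compact
      (isCompact_closedBall (0:E3) R)).mono_set Metric.ball_subset_closedBall)
  have hHint : Integrable H := by
    rw [show H = (G ∘ ψ : (ℝ × ℝ × ℝ) → ℝ) from (coord_fun_eq a R d hR).symm]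
    exact (ψ_measurePreserving.integrable_comp_emb ψ.measurableEmbedding).2 hGint
  -- Step 2: Fubini
  have step2 : (∫ q : ℝ × ℝ × ℝ, H q)
      = ∫ u : ℝ, ∫ p : ℝ × ℝ, H (u, p) := by
    rw [MeasureTheory.Measure.volume_eq_prod] at hHint ⊢
    exact MeasureTheory.integral_prod _ hHint
  -- Step 3: inner slice
  have step3 : (∫ u : ℝ, ∫ p : ℝ × ℝ, H (u, p))
      = ∫ u in (-R)..R, Real.exp (-(u - d) ^ 2 / a)
          * (π * a * (1 - Real.exp (-(R ^ 2 - u ^ 2) / a))) := by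
    have : (fun u : ℝ => ∫ p : ℝ × ℝ, H (u, p))
        = Set.indicator (Set.Ioo (-R) R)
            (fun u => Real.exp (-(u - d) ^ 2 / a)
              * (π * a * (1 - Real.exp (-(R ^ 2 - u ^ 2) / a)))) :=
      funext fun u => inner_slice a R d u ha hR
    rw [this, MeasureTheory.integral_indicator measurableSet_Ioo,
      ← MeasureTheory.integral_Ioc_eq_integral_Ioo,
      ← intervalIntegral.integral_of_le (by linarith : (-R) ≤ R)]
  -- Step 4: evaluate the interval integral
  have step4 : (∫ u in (-R)..R, Real.exp (-(u - d) ^ 2 / a)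
        * (π * a * (1 - Real.exp (-(R ^ 2 - u ^ 2) / a))))
      = π * a * (Real.sqrt π * Real.sqrt a / 2 *
            (erf ((R + d) / Real.sqrt a) + erf ((R - d) / Real.sqrt a))
          - a / (2 * d) * (Real.exp (-(R - d) ^ 2 / a) - Real.exp (-(R + d) ^ 2 / a))) := by
    have hpt : ∀ u : ℝ, Real.exp (-(u - d) ^ 2 / a)
          * (π * a * (1 - Real.exp (-(R ^ 2 - u ^ 2) / a)))
        = π * a * Real.exp (-(u - d) ^ 2 / a)
          - π * a * Real.exp ((2 * d * u - (R ^ 2 + d ^ 2)) / a) := by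
      intro u
      have : Real.exp (-(u - d) ^ 2 / a) * Real.exp (-(R ^ 2 - u ^ 2) / a)
          = Real.exp ((2 * d * u - (R ^ 2 + d ^ 2)) / a) := by
        rw [← Real.exp_add]
        congr 1
        ring
      calc Real.exp (-(u - d) ^ 2 / a) * (π * a * (1 - Real.exp (-(R ^ 2 - u ^ 2) / a)))
          = π * a * Real.exp (-(u - d) ^ 2 / a)
            - π * a * (Real.exp (-(u - d) ^ 2 / a) * Real.exp (-(R ^ 2 - u ^ 2) / a)) := by
            ring
        _ = π * a * Real.exp (-(u - d) ^ 2 / a)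
            - π * a * Real.exp ((2 * d * u - (R ^ 2 + d ^ 2)) / a) := by rw [this]
    rw [intervalIntegral.integral_congr (fun u _ => hpt u)]
    have c1 : Continuous fun u : ℝ => π * a * Real.exp (-(u - d) ^ 2 / a) :=
      continuous_const.mul (Real.continuous_exp.comp
        ((((continuous_id.sub continuous_const).pow 2).neg).div_const a))
    have c2 : Continuous fun u : ℝ => π * a * Real.exp ((2 * d * u - (R ^ 2 + d ^ 2)) / a) :=
      continuous_const.mul (Real.continuous_exp.comp
        ((((continuous_const.mul continuous_id).sub continuous_const)).div_const a))
    rw [intervalIntegral.integral_sub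
      (c1.intervalIntegrable _ _) (c2.intervalIntegrable _ _),
      intervalIntegral.integral_const_mul, intervalIntegral.integral_const_mul,
      gauss_interval a d R ha, exp_linear_interval a d R ha hd]
    ring
  rw [step1, step2, step3, step4]
  -- Final arithmetic
  have hs : (0:ℝ) < Real.sqrt (D * t) := Real.sqrt_pos.2 (by positivity)
  have hπs : (0:ℝ) < Real.sqrt π := Real.sqrt_pos.2 Real.pi_pos
  have hsa : Real.sqrt a = 2 * Real.sqrt (D * t) := by
    rw [show a = (2 * Real.sqrt (D * t)) ^ 2 by
      rw [mul_pow, Real.sq_sqrt (by positivity : (0:ℝ) ≤ D * t)]; ring]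
    exact Real.sqrt_sq (by positivity)
  have hXpos : (0:ℝ) < π * a := by positivity
  have hrpow : (4 * π * D * t) ^ (-(3 : ℝ) / 2)
      = ((π * a) * Real.sqrt (π * a))⁻¹ := by
    rw [show 4 * π * D * t = π * a by rw [hadef]; ring]
    rw [show (-(3:ℝ)/2) = -(3/2 : ℝ) by norm_num, Real.rpow_neg hXpos.le]
    congr 1
    rw [show (3/2 : ℝ) = 1 + 1/2 by norm_num, Real.rpow_add hXpos, Real.rpow_one,
      ← Real.sqrt_eq_rpow]
  rw [hrpow]
  have hsqa : Real.sqrt (π * a) = Real.sqrt π * Real.sqrt a :=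
    Real.sqrt_mul Real.pi_pos.le a
  rw [hsqa, hsa]
  have hππ : Real.sqrt π * Real.sqrt π = π := Real.mul_self_sqrt Real.pi_pos.le
  have hss : Real.sqrt (D * t) * Real.sqrt (D * t) = D * t :=
    Real.mul_self_sqrt (by positivity)
  have hane : a = 4 * (Real.sqrt (D * t) * Real.sqrt (D * t)) := by
    rw [hss, hadef]; ring
  rw [hane, ← hππ]
  field_simp
  ring
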